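/- Let n be a positive integer and set i₀ = 10^{n−1} − 10^{⌊n/2⌋−1} + 1. Then ∑_{j=0}^{n−1} ⟨i₀/10^j⟩ equals n/2 if n is even and (n+1)/2 if n is odd, up to an error of O(10^{−n/2}). -/

import Mathlib

lemma fract_nat_div (N d : ℕ) (hd : 0 < d) :
    Int.fract ((N:ℝ)/d) = ((N % d : ℕ):ℝ)/d := by
  conv_lhs => rw [← Nat.div_add_mod N d]
  push_cast
  rw [add_div, mul_div_cancel_left₀ _ (by positivity : (d:ℝ) ≠ 0),
    (Int.cast_natCast (N/d) : _ = (_:ℝ)).symm, Int.fract_intCast_add,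
    Int.fract_eq_self.mpr]
  constructor
  · positivity
  · rw [div_lt_one (by positivity)]
    exact_mod_cast Nat.mod_lt _ hd

lemma fract_pow10 (N j : ℕ) :
    Int.fract ((N:ℝ)/(10:ℝ)^j) = ((N % 10^j : ℕ):ℝ)/(10:ℝ)^j := by
  have h := fract_nat_div N (10^j) (by positivity)
  have hc : (((10:ℕ)^j : ℕ):ℝ) = (10:ℝ)^j := by push_cast; ring
  rw [hc] at h
  exact h

lemma aux_mod1 (a b j : ℕ) (hba : b ≤ a) (hjb : j ≤ b) (hj : 1 ≤ j) :
    (10^a - 10^b + 1) % 10^j = 1 := by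
  obtain ⟨k, hk⟩ : (10:ℕ)^j ∣ (10^a - 10^b) :=
    Nat.dvd_sub (pow_dvd_pow 10 (hjb.trans hba)) (pow_dvd_pow 10 hjb)
  rw [hk, Nat.mul_add_mod]
  exact Nat.mod_eq_of_lt (Nat.one_lt_pow (by omega) (by norm_num))

lemma aux_mod2 (a b j : ℕ) (hb : 1 ≤ b) (hbj : b < j) (hja : j ≤ a) :
    (10^a - 10^b + 1) % 10^j = 10^j - 10^b + 1 := by
  have h1 : (10:ℕ)^b * 10 ≤ 10^j := by
    calc (10:ℕ)^b * 10 = 10^(b+1) := (pow_succ 10 b).symm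
    _ ≤ 10^j := Nat.pow_le_pow_right (by norm_num) (by omega)
  have h2 : (10:ℕ) ≤ 10^b := by
    calc (10:ℕ) = 10^1 := (pow_one 10).symm
    _ ≤ 10^b := Nat.pow_le_pow_right (by norm_num) hb
  have hpow : (10:ℕ)^j * 10^(a-j) = 10^a := by rw [← pow_add]; congr 1; omega
  have h1j : 1 ≤ (10:ℕ)^(a-j) := Nat.one_le_pow _ _ (by norm_num)
  have hms : (10:ℕ)^j * (10^(a-j) - 1) = 10^a - 10^j := by
    rw [Nat.mul_sub, hpow, mul_one]
  have h3 : (10:ℕ)^j ≤ 10^a := Nat.pow_le_pow_right (by norm_num) hja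
  have key : 10^a - 10^b + 1 = 10^j * (10^(a-j) - 1) + (10^j - 10^b + 1) := by omega
  rw [key, Nat.mul_add_mod, Nat.mod_eq_of_lt (by omega)]

theorem stmt5 :
    ∃ C > (0:ℝ), ∀ n : ℕ, 2 ≤ n →
      |(∑ j ∈ Finset.range n,
          Int.fract (((10 ^ (n - 1) - 10 ^ (n / 2 - 1) + 1 : ℕ) : ℝ) / 10 ^ j)) -
        (if Even n then (n:ℝ) / 2 else ((n:ℝ) + 1) / 2)| ≤ C * (10:ℝ) ^ (-(n:ℝ) / 2) := by
  refine ⟨100, by norm_num, ?_⟩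
  intro n hn
  by_cases hsm : n ≤ 3
  · interval_cases n
    · push_cast
      rw [show (-(2:ℝ)/2) = ((-1:ℤ):ℝ) by norm_num, Real.rpow_intCast,
        Finset.sum_range_succ, Finset.sum_range_one,
        show ((10:ℝ) / 10 ^ 0) = ((10:ℤ):ℝ) by norm_num,
        show ((10:ℝ) / 10 ^ 1) = ((1:ℤ):ℝ) by norm_num,
        Int.fract_intCast, Int.fract_intCast]
      norm_num
    · push_cast
      have h : (100:ℝ) * (10:ℝ) ^ (-(3:ℝ)/2) = 10 ^ ((1:ℝ)/2) := by
        rw [show ((1:ℝ)/2) = 2 + (-(3:ℝ)/2) by norm_num, Real.rpow_add (by norm_num),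
          show ((2:ℝ)) = ((2:ℕ):ℝ) by norm_num, Real.rpow_natCast]
        norm_num
      rw [h, ← Real.sqrt_eq_rpow]
      have h2 : (3:ℝ) ≤ Real.sqrt 10 := by
        rw [show (3:ℝ) = Real.sqrt 9 by
          rw [show (9:ℝ) = 3^2 by norm_num, Real.sqrt_sq (by norm_num)]]
        exact Real.sqrt_le_sqrt (by norm_num)
      have h3 : |(∑ j ∈ Finset.range 3,
              Int.fract (((10 ^ (3 - 1) - 10 ^ (3 / 2 - 1) + 1 : ℕ) : ℝ) / 10 ^ j)) -
            (if Even 3 then (3:ℝ) / 2 else ((3:ℝ) + 1) / 2)| ≤ 2 := by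
        have h1 : ((10 ^ (3 - 1) - 10 ^ (3 / 2 - 1) + 1 : ℕ) : ℝ) = ((100:ℤ):ℝ) := by norm_num
        rw [Finset.sum_range_succ, Finset.sum_range_succ, Finset.sum_range_one, h1]
        norm_num
      linarith
  · push_neg at hsm
    set m := n / 2 with hmdef
    have hm2 : 2 ≤ m := by omega
    have hmn : m + 1 ≤ n := by omega
    set N : ℕ := 10 ^ (n - 1) - 10 ^ (m - 1) + 1 with hNdef
    set F : ℕ → ℝ := fun j => Int.fract ((N:ℝ) / (10:ℝ)^j) with hFdef
    set a : ℝ := (1/10:ℝ)^(m-1) with hadef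
    set b : ℝ := (1/10:ℝ)^(n-m) with hbdef
    have ha0 : 0 < a := by positivity
    have hb0 : 0 < b := by positivity
    have ha1 : a ≤ 1 := pow_le_one₀ (by norm_num) (by norm_num)
    have haa : (10:ℝ)^(m-1) * a = 1 := by
      rw [hadef, ← mul_pow]; norm_num
    -- value of F 0
    have h0 : F 0 = 0 := by
      simp [hFdef, fract_pow10 N 0, Nat.mod_one]
    -- values on Ico 1 m
    have hv1 : ∀ j ∈ Finset.Ico 1 m, F j = (1/10:ℝ)^j := by
      intro j hj
      rw [Finset.mem_Ico] at hj
      rw [hFdef]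
      simp only []
      rw [fract_pow10, hNdef, aux_mod1 (n-1) (m-1) j (by omega) (by omega) (by omega)]
      simp [div_pow]
    -- values on Ico m n
    have hv2 : ∀ j ∈ Finset.Ico m n, F j = 1 - ((10:ℝ)^(m-1) - 1) * (1/10:ℝ)^j := by
      intro j hj
      rw [Finset.mem_Ico] at hj
      rw [hFdef]
      simp only []
      rw [fract_pow10, hNdef, aux_mod2 (n-1) (m-1) j (by omega) (by omega) (by omega)]
      have hle : (10:ℕ)^(m-1) ≤ 10^j := Nat.pow_le_pow_right (by norm_num) (by omega)
      have hcast : ((10^j - 10^(m-1) + 1 : ℕ):ℝ) = (10:ℝ)^j - (10:ℝ)^(m-1) + 1 := by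
        push_cast [hle]
        ring
      rw [hcast, div_pow, one_pow]
      have h10 : (0:ℝ) < (10:ℝ)^j := by positivity
      field_simp
      ring
    -- split the sum
    have hsplit : ∑ j ∈ Finset.range n, F j
        = F 0 + ((∑ j ∈ Finset.Ico 1 m, F j) + (∑ j ∈ Finset.Ico m n, F j)) := by
      rw [Finset.range_eq_Ico,
        ← Finset.sum_Ico_consecutive F (by omega : (0:ℕ) ≤ m) (by omega : m ≤ n),
        ← Finset.sum_Ico_consecutive F (by omega : (0:ℕ) ≤ 1) (by omega : 1 ≤ m)]
      have : Finset.Ico 0 1 = {0} := by decide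
      rw [this, Finset.sum_singleton, add_assoc]
    -- geometric sums
    have hm' : (1/10:ℝ)^m = a * (1/10) := by
      rw [hadef, ← pow_succ]; congr 1; omega
    have hn' : (1/10:ℝ)^n = a * b * (1/10) := by
      rw [hadef, hbdef, ← pow_add, ← pow_succ]; congr 1; omega
    have hg1 : ∑ j ∈ Finset.Ico 1 m, (1/10:ℝ)^j = (1 - a)/9 := by
      rw [geom_sum_Ico (by norm_num) (by omega), hm', pow_one]
      ring
    have hg2 : ∑ j ∈ Finset.Ico m n, (1/10:ℝ)^j = a * (1 - b)/9 := by
      rw [geom_sum_Ico (by norm_num) (by omega), hm', hn']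
      ring
    have hsum1 : ∑ j ∈ Finset.Ico 1 m, F j = (1 - a)/9 := by
      rw [Finset.sum_congr rfl hv1, hg1]
    have hsum2 : ∑ j ∈ Finset.Ico m n, F j
        = ((n - m : ℕ):ℝ) - ((10:ℝ)^(m-1) - 1) * (a * (1 - b)/9) := by
      rw [Finset.sum_congr rfl hv2, Finset.sum_sub_distrib, Finset.sum_const,
        ← Finset.mul_sum, hg2, Nat.card_Ico]
      simp
    -- total
    have hS : ∑ j ∈ Finset.range n, F j = ((n - m : ℕ):ℝ) + (1 - a) * b / 9 := by
      rw [hsplit, h0, hsum1, hsum2]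
      linear_combination (-(1 - b)/9) * haa
    -- target
    have htarget : (if Even n then (n:ℝ)/2 else ((n:ℝ)+1)/2) = ((n - m : ℕ):ℝ) := by
      rcases Nat.even_or_odd n with he | ho
      · rw [if_pos he]
        obtain ⟨k, hk⟩ := he
        have h2 : (n - m) * 2 = n := by omega
        rw [div_eq_iff (by norm_num : (2:ℝ) ≠ 0)]
        exact_mod_cast congrArg (Nat.cast : ℕ → ℝ) h2.symm
      · rw [if_neg (Nat.not_even_iff_odd.mpr ho)]
        obtain ⟨k, hk⟩ := ho
        have h2 : (n - m) * 2 = n + 1 := by omega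
        rw [div_eq_iff (by norm_num : (2:ℝ) ≠ 0)]
        exact_mod_cast congrArg (Nat.cast : ℕ → ℝ) h2.symm
    -- bound on b
    have hble : b ≤ (10:ℝ) ^ (-(n:ℝ)/2) := by
      have hb' : b = (10:ℝ) ^ (-(((n - m : ℕ):ℝ))) := by
        rw [Real.rpow_neg (by norm_num), Real.rpow_natCast, hbdef]
        rw [div_pow, one_pow, one_div]
      rw [hb']
      apply Real.rpow_le_rpow_of_exponent_le (by norm_num)
      have : (n:ℝ) ≤ 2 * ((n - m : ℕ):ℝ) := by
        have : n ≤ 2 * (n - m) := by omega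
        exact_mod_cast this
      linarith
    have hrpos : (0:ℝ) < (10:ℝ) ^ (-(n:ℝ)/2) := Real.rpow_pos_of_pos (by norm_num) _
    -- finish
    have habs : ((n - m : ℕ):ℝ) + (1 - a) * b / 9 - ((n - m : ℕ):ℝ) = (1 - a) * b / 9 := by
      ring
    rw [hS, htarget, habs,
      abs_of_nonneg (div_nonneg (mul_nonneg (by linarith) hb0.le) (by norm_num))]
    have hb1 : (1 - a) * b / 9 ≤ b := by nlinarith
    linarith
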